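/- Let ℓ be an odd positive integer and let k be a positive integer with k < φ^ℓ. Then (k·F_ℓ, k·F_{ℓ+1}) is a Hofstadter G pair, i.e., G(k·F_{ℓ+1}) = k·F_ℓ. -/

import Mathlib

noncomputable def goldenphi : ℝ := (1 + Real.sqrt 5) / 2

noncomputable def hofG (x : ℕ) : ℕ := (⌊((x : ℝ) + 1) / goldenphi⌋).toNat

theorem stmt_0 (ℓ k : ℕ) (hℓpos : 0 < ℓ) (hℓodd : Odd ℓ) (hkpos : 0 < k)
    (hk : (k : ℝ) < goldenphi ^ ℓ) :
    hofG (k * Nat.fib (ℓ + 1)) = k * Nat.fib ℓ := by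
  have hphi : goldenphi = Real.goldenRatio := rfl
  have h1 : (1 : ℝ) < Real.goldenRatio := Real.one_lt_goldenRatio
  have hpos : (0 : ℝ) < Real.goldenRatio := Real.goldenRatio_pos
  have hconj : (Nat.fib (ℓ + 1) : ℝ) - Real.goldenRatio * Nat.fib ℓ = Real.goldenConj ^ ℓ :=
    Real.fib_succ_sub_goldenRatio_mul_fib ℓ
  have hpsi : Real.goldenConj ^ ℓ = -(Real.goldenRatio ^ ℓ)⁻¹ := by
    have : Real.goldenConj = -Real.goldenRatio⁻¹ := by rw [Real.inv_goldenRatio]; ring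
    rw [this, hℓodd.neg_pow, inv_pow]
  have hplpos : (0 : ℝ) < Real.goldenRatio ^ ℓ := pow_pos hpos ℓ
  rw [hphi] at hk
  -- key value
  have hval : ((k * Nat.fib (ℓ + 1) : ℕ) : ℝ) + 1 =
      Real.goldenRatio * (k * Nat.fib ℓ) + (1 - k / Real.goldenRatio ^ ℓ) := by
    push_cast
    have : (Nat.fib (ℓ + 1) : ℝ) = Real.goldenRatio * Nat.fib ℓ - (Real.goldenRatio ^ ℓ)⁻¹ := by
      rw [hpsi] at hconj; linarith
    rw [this]
    field_simp
    ring
  have hfloor : ⌊(((k * Nat.fib (ℓ + 1) : ℕ) : ℝ) + 1) / Real.goldenRatio⌋ = (k * Nat.fib ℓ : ℕ) := by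
    rw [Int.floor_eq_iff]
    rw [hval]
    constructor
    · rw [le_div_iff₀ hpos]
      push_cast
      nlinarith [hk, (div_lt_one hplpos).mpr hk]
    · rw [div_lt_iff₀ hpos]
      push_cast
      have h2 : (0 : ℝ) < (k : ℝ) / Real.goldenRatio ^ ℓ := by positivity
      nlinarith
  unfold hofG
  rw [hphi, hfloor]
  exact Int.toNat_natCast _
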